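/- Let 𝐦 = (m_1,...,m_n) be positive integers with m = Σ m_i, let A_𝐦(x,y) = Σ_{π ∈ 𝔖_𝐦} x^{des(π)} y^{m+1-des(π)} with boundary convention π_0 = π_{m+1} = 0, and let 𝐦̄ be 𝐦 with an extra letter n+1 occurring once. Then A_{𝐦̄}(x,y) = T(A_𝐦(x,y)) where T = xy(∂/∂x + ∂/∂y). -/

import Mathlib

open MvPolynomial

/-- Number of descents in `a :: rest`, counting consecutive pairs. -/
def desAux : List ℕ → ℕ
  | a :: b :: t => (if b < a then 1 else 0) + desAux (b :: t)
  | _ => 0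

/-- The descent number of a word `w = π₁…π_m`, with the boundary convention
`π₀ = π_{m+1} = 0`. -/
def des (w : List ℕ) : ℕ := desAux (0 :: (w ++ [0]))

/-- The list of all distinct arrangements (multipermutations) of a multiset. -/
noncomputable def arrangements (M : Multiset ℕ) : List (List ℕ) :=
  M.toList.permutations.dedup

/-- The multiset `{1^{m₁}, 2^{m₂}, …, n^{m_n}}` encoded by the list of
multiplicities `ms = [m₁, …, m_n]`. -/
def msetOf (ms : List ℕ) : Multiset ℕ :=
  ((List.range ms.length).flatMap fun i => List.replicate (ms.getD i 0) (i + 1) : List ℕ)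

/-- The homogenized multiset Eulerian polynomial
`A_𝐦(x,y) = Σ_π x^{des π} y^{m+1-des π}`. -/
noncomputable def Abi (ms : List ℕ) : MvPolynomial (Fin 2) ℚ :=
  ((arrangements (msetOf ms)).map fun w =>
    X 0 ^ des w * X 1 ^ ((msetOf ms).card + 1 - des w)).sum

/-- The multiset Eulerian polynomial `A_𝐦(x) = Σ_π x^{des π}`. -/
noncomputable def Auni (ms : List ℕ) : Polynomial ℚ :=
  ((arrangements (msetOf ms)).map fun w => Polynomial.X ^ des w).sum

/-- The Eulerian operator `T = xy(∂/∂x + ∂/∂y)`. -/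
noncomputable def Teul (f : MvPolynomial (Fin 2) ℚ) : MvPolynomial (Fin 2) ℚ :=
  X 0 * X 1 * (pderiv (0 : Fin 2) f + pderiv (1 : Fin 2) f)

/-! ### Auxiliary lemmas on lists -/

lemma coe_insertIdx (c : ℕ) : ∀ (j : ℕ) (l : List ℕ), j ≤ l.length →
    ((l.insertIdx j c : List ℕ) : Multiset ℕ) = c ::ₘ (l : Multiset ℕ)
  | 0, l, _ => rfl
  | j+1, b::t, h => by
      rw [List.insertIdx_succ_cons]
      have := coe_insertIdx c j t (by simpa using h)
      simp only [← Multiset.cons_coe, this, Multiset.cons_swap]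

lemma indexOf_insertIdx (c : ℕ) : ∀ (j : ℕ) (l : List ℕ), j ≤ l.length → c ∉ l →
    (l.insertIdx j c).idxOf c = j
  | 0, l, _, _ => by simp [List.idxOf_cons_self]
  | j+1, b::t, h, hc => by
      rw [List.insertIdx_succ_cons, List.idxOf_cons_ne _ (by rintro rfl; exact hc (by simp)),
        indexOf_insertIdx c j t (by simpa using h) (fun h' => hc (by simp [h']))]

lemma insertIdx_indexOf_eraseIdx (c : ℕ) : ∀ (l : List ℕ), c ∈ l →
    (l.eraseIdx (l.idxOf c)).insertIdx (l.idxOf c) c = l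
  | b::t, hc => by
      by_cases hb : b = c
      · subst hb; simp [List.idxOf_cons_self]
      · rw [List.idxOf_cons_ne _ (by simpa using hb)]
        simpa [List.eraseIdx, List.insertIdx_succ_cons] using
          insertIdx_indexOf_eraseIdx c t
            (by cases hc with | head => exact absurd rfl hb | tail _ h => exact h)

lemma insertIdx_append_left (c : ℕ) : ∀ (j : ℕ) (w l₂ : List ℕ), j ≤ w.length →
    (w ++ l₂).insertIdx j c = w.insertIdx j c ++ l₂
  | 0, w, l₂, _ => rfl
  | j+1, b::t, l₂, h => by
      simp only [List.cons_append, List.insertIdx_succ_cons,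
        insertIdx_append_left c j t l₂ (by simpa using h)]

/-! ### Auxiliary lemmas on descents -/

lemma desAux_le : ∀ (a : ℕ) (l : List ℕ), desAux (a :: l) ≤ l.length
  | _, [] => le_refl 0
  | a, b :: t => by
      have := desAux_le b t
      simp only [desAux, List.length_cons]
      split <;> omega

lemma des_le (w : List ℕ) : des w ≤ w.length + 1 := by
  have h := desAux_le 0 (w ++ [0])
  rw [List.length_append] at h
  simpa [des] using h

lemma desAux_eq_sum : ∀ (a : ℕ) (l : List ℕ),
    ∑ j ∈ Finset.range l.length,
      (if (a :: l).getD (j+1) 0 < (a :: l).getD j 0 then 1 else 0) = desAux (a :: l)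
  | _, [] => rfl
  | a, b :: t => by
      rw [List.length_cons, Finset.sum_range_succ']
      have IH := desAux_eq_sum b t
      simp only [List.getD_cons_succ, List.getD_cons_zero] at *
      rw [IH]
      simp only [desAux]
      omega

lemma desAux_insertIdx (c : ℕ) : ∀ (j : ℕ) (a : ℕ) (l : List ℕ), j < l.length → a < c →
    (∀ x ∈ l, x < c) →
    desAux ((a :: l).insertIdx (j+1) c)
      = desAux (a :: l) + (if (a :: l).getD (j+1) 0 < (a :: l).getD j 0 then 0 else 1)
  | 0, a, b :: t, _, ha, hl => by
      have hb : b < c := hl b (by simp)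
      simp only [List.insertIdx_succ_cons, List.insertIdx_zero, desAux,
        List.getD_cons_succ, List.getD_cons_zero]
      have h1 : ¬ c < a := by omega
      simp only [if_neg h1, if_pos hb]
      split <;> omega
  | j+1, a, b :: t, h, ha, hl => by
      have IH := desAux_insertIdx c j b t (by simpa using h) (hl b (by simp))
        (fun x hx => hl x (by simp [hx]))
      show desAux ((a :: b :: t).insertIdx (j+2) c) = _
      rw [List.insertIdx_succ_cons, List.insertIdx_succ_cons]
      rw [List.insertIdx_succ_cons] at IH
      simp only [desAux, List.getD_cons_succ] at IH ⊢
      by_cases hx : t.getD j 0 < (b :: t).getD j 0 <;>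
        simp only [hx, if_true, if_false] at IH ⊢ <;> omega

lemma des_insertIdx (w : List ℕ) (c j : ℕ) (hj : j ≤ w.length) (hc : 0 < c)
    (hw : ∀ x ∈ w, x < c) :
    des (w.insertIdx j c) = des w +
      (if (0 :: (w ++ [0])).getD (j+1) 0 < (0 :: (w ++ [0])).getD j 0 then 0 else 1) := by
  have h1 : w.insertIdx j c ++ [0] = (w ++ [0]).insertIdx j c :=
    (insertIdx_append_left c j w [0] hj).symm
  have h2 : (0 : ℕ) :: (w ++ [0]).insertIdx j c = (0 :: (w ++ [0])).insertIdx (j+1) c :=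
    (List.insertIdx_succ_cons).symm
  rw [des, h1, h2, desAux_insertIdx c j 0 (w ++ [0]) (by simp [List.length_append]; omega) hc
    (fun x hx => by rcases List.mem_append.1 hx with h|h; exact hw x h; simp at h; omega), des]

/-! ### Auxiliary lemmas on the operator `T` -/

lemma Teul_sum {ι : Type*} (s : Finset ι) (g : ι → MvPolynomial (Fin 2) ℚ) :
    Teul (∑ i ∈ s, g i) = ∑ i ∈ s, Teul (g i) := by
  simp [Teul, map_sum, Finset.mul_sum, ← Finset.sum_add_distrib]

lemma Teul_monomial (k m : ℕ) (hk : k ≤ m + 1) :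
    Teul (X 0 ^ k * X 1 ^ (m + 1 - k)) =
      k • (X 0 ^ k * X 1 ^ (m + 2 - k)) + (m + 1 - k) • (X 0 ^ (k + 1) * X 1 ^ (m + 1 - k)) := by
  have h01 : (0 : Fin 2) ≠ 1 := by decide
  have h10 : (1 : Fin 2) ≠ 0 := h01.symm
  rcases Nat.eq_zero_or_pos k with rfl | hk0
  · simp only [Nat.sub_zero, Nat.add_sub_cancel, pow_zero, one_mul, zero_smul, zero_add,
      Teul, pderiv_pow, pderiv_X_self, pderiv_X_of_ne h10, pderiv_X_of_ne h01,
      mul_zero, zero_mul, zero_add, mul_one, nsmul_eq_mul]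
    ring
  · rcases Nat.lt_or_ge k (m + 1) with hk1 | hk1
    · obtain ⟨a, rfl⟩ : ∃ a, k = a + 1 := ⟨k - 1, by omega⟩
      obtain ⟨b, rfl⟩ : ∃ b, m = a + b + 1 := ⟨m - a - 1, by omega⟩
      rw [show a + b + 1 + 1 - (a + 1) = b + 1 by omega,
        show a + b + 1 + 2 - (a + 1) = b + 2 by omega]
      simp only [Teul, pderiv_mul, pderiv_pow, pderiv_X_self, pderiv_X_of_ne h10,
        pderiv_X_of_ne h01, mul_zero, zero_mul, add_zero, zero_add, mul_one,
        Nat.add_sub_cancel, nsmul_eq_mul]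
      push_cast
      ring
    · have hkm : k = m + 1 := by omega
      subst hkm
      rw [show m + 1 + 1 - (m + 1) = 1 by omega, Nat.sub_self]
      simp only [Teul, pderiv_mul, pderiv_pow, pderiv_X_self, pderiv_X_of_ne h10,
        pderiv_X_of_ne h01, mul_zero, zero_mul, add_zero, zero_add, mul_one, pow_zero,
        Nat.add_sub_cancel, nsmul_eq_mul, zero_smul, smul_zero]
      push_cast
      ring

/-! ### Arrangements as a finset -/

noncomputable def arrFinset (M : Multiset ℕ) : Finset (List ℕ) :=
  ⟨(arrangements M : List (List ℕ)), by
    rw [Multiset.coe_nodup]; exact List.nodup_dedup _⟩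

lemma mem_arrFinset {M : Multiset ℕ} {w : List ℕ} :
    w ∈ arrFinset M ↔ (w : Multiset ℕ) = M := by
  show w ∈ (arrangements M : Multiset (List ℕ)) ↔ _
  rw [Multiset.mem_coe, arrangements, List.mem_dedup, List.mem_permutations,
    ← Multiset.coe_eq_coe, Multiset.coe_toList]

lemma sum_arr (M : Multiset ℕ) (f : List ℕ → MvPolynomial (Fin 2) ℚ) :
    ((arrangements M).map f).sum = ∑ w ∈ arrFinset M, f w := by
  rw [Finset.sum]
  rfl

/-! ### The multiset `msetOf` -/

lemma mem_msetOf {ms : List ℕ} {x : ℕ} (hx : x ∈ msetOf ms) : 0 < x ∧ x < ms.length + 1 := by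
  simp only [msetOf, Multiset.mem_coe, List.mem_flatMap, List.mem_range,
    List.mem_replicate] at hx
  obtain ⟨i, hi, -, rfl⟩ := hx
  omega

lemma msetOf_append_one (ms : List ℕ) :
    msetOf (ms ++ [1]) = (ms.length + 1) ::ₘ msetOf ms := by
  unfold msetOf
  rw [List.length_append, List.length_singleton, List.range_succ, List.flatMap_append]
  have h1 : (List.range ms.length).flatMap
        (fun i => List.replicate ((ms ++ [1]).getD i 0) (i + 1))
      = (List.range ms.length).flatMap (fun i => List.replicate (ms.getD i 0) (i + 1)) := by
    apply List.flatMap_congr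
    intro i hi
    rw [List.getD_append _ _ _ _ (List.mem_range.1 hi)]
  have h2 : [ms.length].flatMap (fun i => List.replicate ((ms ++ [1]).getD i 0) (i + 1))
      = [ms.length + 1] := by
    simp [List.getD_append_right _ _ _ _ (le_refl ms.length)]
  rw [h1, h2, ← Multiset.coe_add]
  rw [add_comm]
  rfl

/-! ### The key bijection and inner sum -/

lemma sum_insert_bij (M : Multiset ℕ) (c : ℕ) (hc : ∀ x ∈ M, x < c)
    (F : List ℕ → MvPolynomial (Fin 2) ℚ) :
    ∑ w' ∈ arrFinset (c ::ₘ M), F w'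
      = ∑ p ∈ (arrFinset M).sigma (fun _ => Finset.range (Multiset.card M + 1)),
          F (p.1.insertIdx p.2 c) := by
  have hcM : c ∉ M := fun h => lt_irrefl c (hc c h)
  apply Finset.sum_nbij'
    (i := fun w' => (⟨w'.eraseIdx (w'.idxOf c), w'.idxOf c⟩ : Σ _ : List ℕ, ℕ))
    (j := fun p => p.1.insertIdx p.2 c)
  · intro w' hw'
    rw [mem_arrFinset] at hw'
    have hcw : c ∈ w' := by
      rw [← Multiset.mem_coe, hw']; exact Multiset.mem_cons_self c M
    have hidx : w'.idxOf c < w'.length := List.idxOf_lt_length_iff.2 hcw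
    have hlen : w'.length = Multiset.card M + 1 := by
      have := congrArg Multiset.card hw'
      simpa using this
    have hins := insertIdx_indexOf_eraseIdx c w' hcw
    have hle : w'.idxOf c ≤ (w'.eraseIdx (w'.idxOf c)).length := by
      have := List.length_eraseIdx_add_one hidx; omega
    have hcoe : ((w'.eraseIdx (w'.idxOf c) : List ℕ) : Multiset ℕ) = M := by
      have := coe_insertIdx c (w'.idxOf c) (w'.eraseIdx (w'.idxOf c)) hle
      rw [hins, hw'] at this
      exact ((Multiset.cons_inj_right c).1 this.symm)
    rw [Finset.mem_sigma, mem_arrFinset, Finset.mem_range]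
    exact ⟨hcoe, by show List.idxOf c w' < Multiset.card M + 1; omega⟩
  · rintro ⟨w, j⟩ hp
    rw [Finset.mem_sigma, mem_arrFinset, Finset.mem_range] at hp
    obtain ⟨hw, hj⟩ := hp
    dsimp only at hw hj ⊢
    have hlen : w.length = Multiset.card M := by
      have := congrArg Multiset.card hw
      simpa using this
    rw [mem_arrFinset, coe_insertIdx c j w (by omega), hw]
  · intro w' hw'
    rw [mem_arrFinset] at hw'
    have hcw : c ∈ w' := by
      rw [← Multiset.mem_coe, hw']; exact Multiset.mem_cons_self c M
    exact insertIdx_indexOf_eraseIdx c w' hcw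
  · rintro ⟨w, j⟩ hp
    rw [Finset.mem_sigma, mem_arrFinset, Finset.mem_range] at hp
    obtain ⟨hw, hj⟩ := hp
    dsimp only at hw hj ⊢
    have hlen : w.length = Multiset.card M := by
      have := congrArg Multiset.card hw
      simpa using this
    have hcw : c ∉ w := fun h => lt_irrefl c (hc c (by rw [← hw]; exact Multiset.mem_coe.2 h))
    have hidx := indexOf_insertIdx c j w (by omega) hcw
    have herase := List.eraseIdx_insertIdx_self (i := j) (l := w) c
    simp only [Sigma.mk.inj_iff, hidx, herase, heq_eq_eq, and_self]
  · intro w' hw'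
    rw [mem_arrFinset] at hw'
    have hcw : c ∈ w' := by
      rw [← Multiset.mem_coe, hw']; exact Multiset.mem_cons_self c M
    dsimp only
    rw [insertIdx_indexOf_eraseIdx c w' hcw]

lemma innerSumIns (w : List ℕ) (c : ℕ) (hc : 0 < c) (hw : ∀ x ∈ w, x < c) :
    ∑ j ∈ Finset.range (w.length + 1),
      (X 0 ^ des (w.insertIdx j c) * X 1 ^ (w.length + 2 - des (w.insertIdx j c))
        : MvPolynomial (Fin 2) ℚ)
      = Teul (X 0 ^ des w * X 1 ^ (w.length + 1 - des w)) := by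
  classical
  set k := des w with hkdef
  have hk : k ≤ w.length + 1 := des_le w
  set p : ℕ → Prop := fun j => (0 :: (w ++ [0])).getD (j+1) 0 < (0 :: (w ++ [0])).getD j 0
    with hp
  have hins : ∀ j ∈ Finset.range (w.length + 1),
      (X 0 ^ des (w.insertIdx j c) * X 1 ^ (w.length + 2 - des (w.insertIdx j c))
        : MvPolynomial (Fin 2) ℚ)
      = if p j then X 0 ^ k * X 1 ^ (w.length + 2 - k)
        else X 0 ^ (k + 1) * X 1 ^ (w.length + 1 - k) := by
    intro j hj
    rw [Finset.mem_range] at hj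
    rw [des_insertIdx w c j (by omega) hc hw]
    by_cases hpj : p j
    · rw [if_pos hpj, if_pos hpj, add_zero]
    · rw [if_neg hpj, if_neg hpj, show w.length + 2 - (k + 1) = w.length + 1 - k by omega]
  rw [Finset.sum_congr rfl hins, Finset.sum_ite, Finset.sum_const, Finset.sum_const]
  have hcard1 : (Finset.filter p (Finset.range (w.length + 1))).card = k := by
    rw [Finset.card_filter]
    have := desAux_eq_sum 0 (w ++ [0])
    rw [List.length_append, List.length_singleton] at this
    exact this
  have hcard2 : (Finset.filter (fun j => ¬ p j) (Finset.range (w.length + 1))).card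
      = w.length + 1 - k := by
    have := Finset.card_filter_add_card_filter_not (s := Finset.range (w.length + 1))
      (p := p)
    rw [Finset.card_range] at this
    omega
  rw [hcard1, hcard2, Teul_monomial k w.length hk]

/-! ### Main theorem -/

/-- Adjoining a new largest letter `n+1` with multiplicity one corresponds to
applying the operator `T`: `A_{𝐦̄}(x,y) = T(A_𝐦(x,y))`. -/
theorem Abi_append_one (ms : List ℕ) (hms : ∀ i ∈ ms, 0 < i) :
    Abi (ms ++ [1]) = Teul (Abi ms) := by
  classical
  have hMlt : ∀ x ∈ msetOf ms, x < ms.length + 1 := fun x hx => (mem_msetOf hx).2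
  rw [Abi, Abi, msetOf_append_one ms, sum_arr, sum_arr, Teul_sum,
    show Multiset.card ((ms.length + 1) ::ₘ msetOf ms) = Multiset.card (msetOf ms) + 1 by simp,
    sum_insert_bij (msetOf ms) (ms.length + 1) hMlt, Finset.sum_sigma]
  apply Finset.sum_congr rfl
  intro w hw
  rw [mem_arrFinset] at hw
  have hlen : w.length = Multiset.card (msetOf ms) := by
    have := congrArg Multiset.card hw
    simpa using this
  have hwlt : ∀ x ∈ w, x < ms.length + 1 := fun x hx => hMlt x (by rw [← hw]; exact hx)
  have h := innerSumIns w (ms.length + 1) (by omega) hwlt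
  rw [hlen] at h
  rw [show Multiset.card (msetOf ms) + 1 + 1 = Multiset.card (msetOf ms) + 2 by omega]
  exact h
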